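/- Under the assumptions of the BPUC LP relaxation (with W ≥ C_{a_k} not required), the bound Lb1 is attained: there exists a feasible fractional solution (x, y, l) of the LP relaxation whose objective value equals Lb1. Hence the optimal value of the LP relaxation equals Lb1 exactly. -/

import Mathlib

open Finset

/-- the bound `Lb1` is attained by a feasible fractional solution of the
LP relaxation of the basic BPUC formulation, hence the optimal LP value equals `Lb1`. -/
theorem stmt2 (m n : ℕ) (C f c : Fin m → ℝ) (w : Fin n → ℝ)
    (hw : ∀ i, 0 < w i)
    (hC : ∀ j, 0 < C j) (hf : ∀ j, 0 ≤ f j) (hc : ∀ j, 0 ≤ c j)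
    (W : ℝ) (hW : W = ∑ i, w i) (hW0 : 0 < W) (hcap : W ≤ ∑ j, C j)
    (r : Fin m → ℝ) (hr : ∀ j, r j = f j / C j + c j)
    (a : Equiv.Perm (Fin m)) (ha : Monotone fun j => r (a j))
    (k : Fin m)
    (hk : W ≤ ∑ j ∈ univ.filter (fun j => j ≤ k), C (a j))
    (hkmin : ∑ j ∈ univ.filter (fun j => j < k), C (a j) < W) :
    IsLeast
      {z : ℝ | ∃ (x : Fin n → Fin m → ℝ) (y l : Fin m → ℝ),
        (∀ i j, 0 ≤ x i j) ∧ (∀ i j, x i j ≤ 1) ∧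
        (∀ j, 0 ≤ y j) ∧ (∀ j, y j ≤ 1) ∧
        (∀ j, 0 ≤ l j) ∧
        (∀ i, ∑ j, x i j = 1) ∧
        (∀ j, ∑ i, w i * x i j = l j) ∧
        (∀ j, l j ≤ C j * y j) ∧
        z = ∑ j, (f j * y j + c j * l j)}
      ((∑ j ∈ univ.filter (fun j => j < k), C (a j) * r (a j))
        + (W - ∑ j ∈ univ.filter (fun j => j < k), C (a j)) * r (a k)) := by
  set S : ℝ := ∑ j ∈ univ.filter (fun j => j < k), C (a j) with hS
  have hS0 : 0 ≤ S := Finset.sum_nonneg fun j _ => (hC (a j)).le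
  have hWS : 0 < W - S := by linarith
  have hsplit : ∀ g : Fin m → ℝ,
      ∑ j, g j = (∑ j ∈ univ.filter (fun j => j < k), g j)
        + ∑ j ∈ univ.filter (fun j => ¬ j < k), g j := by
    intro g
    exact (Finset.sum_filter_add_sum_filter_not univ _ g).symm
  have hSk : W - S ≤ C (a k) := by
    have : (∑ j ∈ univ.filter (fun j => j ≤ k), C (a j))
        = S + C (a k) := by
      have : univ.filter (fun j : Fin m => j ≤ k)
          = insert k (univ.filter (fun j => j < k)) := by
        ext j
        simp [Finset.mem_filter, Finset.mem_insert, le_iff_lt_or_eq, or_comm]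
      rw [this, Finset.sum_insert (by simp)]
      ring
    linarith
  set lt : Fin m → ℝ := fun j => if j < k then C (a j) else if j = k then W - S else 0 with hlt
  set yt : Fin m → ℝ := fun j => if j < k then 1 else if j = k then (W - S) / C (a k) else 0 with hyt
  have hlt_nonneg : ∀ j, 0 ≤ lt j := by
    intro j
    simp only [hlt]
    split_ifs with h1 h2
    · exact (hC (a j)).le
    · linarith
    · exact le_rfl
  have hlt_le_W : ∀ j, lt j ≤ W := by
    intro j
    simp only [hlt]
    split_ifs with h1 h2
    · have : C (a j) ≤ S := by
        refine Finset.single_le_sum (fun i _ => (hC (a i)).le) ?_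
        simp [h1]
      linarith
    · linarith
    · linarith
  have hsumlt : ∑ j, lt j = W := by
    rw [hsplit lt]
    have h1 : ∑ j ∈ univ.filter (fun j => j < k), lt j = S := by
      refine Finset.sum_congr rfl fun j hj => ?_
      simp only [Finset.mem_filter] at hj
      simp [hlt, hj.2]
    have h2 : ∑ j ∈ univ.filter (fun j => ¬ j < k), lt j = W - S := by
      rw [Finset.sum_eq_single_of_mem k (by simp)]
      · simp [hlt, lt_irrefl]
      · intro j hj hjk
        simp only [Finset.mem_filter] at hj
        simp [hlt, hj.2, hjk]
    rw [h1, h2]; ring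
  constructor
  · -- membership : the witness
    refine ⟨fun i b => lt (a.symm b) / W, fun b => yt (a.symm b), fun b => lt (a.symm b),
      ?_, ?_, ?_, ?_, ?_, ?_, ?_, ?_, ?_⟩
    · intro i b; exact div_nonneg (hlt_nonneg _) hW0.le
    · intro i b
      rw [div_le_one hW0]
      exact hlt_le_W _
    · intro b
      simp only [hyt]
      split_ifs
      · exact zero_le_one
      · exact div_nonneg hWS.le (hC _).le
      · exact le_rfl
    · intro b
      simp only [hyt]
      split_ifs
      · exact le_rfl
      · rw [div_le_one (hC (a k))]; exact hSk
      · exact zero_le_one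
    · intro b; exact hlt_nonneg _
    · intro i
      rw [← Finset.sum_div, Equiv.sum_comp a.symm lt, hsumlt, div_self hW0.ne']
    · intro b
      rw [← Finset.sum_mul, ← hW]
      field_simp
    · intro b
      have hb : b = a (a.symm b) := (a.apply_symm_apply b).symm
      rw [hb]
      set j := a.symm b with hj
      simp only [hlt, hyt, Equiv.symm_apply_apply]
      split_ifs with h1 h2
      · simp
      · rw [h2, mul_div_cancel₀ _ (hC (a k)).ne']
      · simp
    · have hcomp : ∑ b, (f b * yt (a.symm b) + c b * lt (a.symm b))
          = ∑ j, (f (a j) * yt j + c (a j) * lt j) := by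
        rw [← Equiv.sum_comp a (fun b => f b * yt (a.symm b) + c b * lt (a.symm b))]
        simp [Equiv.symm_apply_apply]
      rw [hcomp, hsplit (fun j => f (a j) * yt j + c (a j) * lt j)]
      have h1 : ∑ j ∈ univ.filter (fun j => j < k), (f (a j) * yt j + c (a j) * lt j)
          = ∑ j ∈ univ.filter (fun j => j < k), C (a j) * r (a j) := by
        refine Finset.sum_congr rfl fun j hj => ?_
        simp only [Finset.mem_filter] at hj
        simp only [hlt, hyt, if_pos hj.2]
        rw [hr, mul_add, mul_comm (C (a j)) (f (a j) / C (a j)),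
          div_mul_cancel₀ _ (hC (a j)).ne']
        ring
      have h2 : ∑ j ∈ univ.filter (fun j => ¬ j < k), (f (a j) * yt j + c (a j) * lt j)
          = (W - S) * r (a k) := by
        rw [Finset.sum_eq_single_of_mem k (by simp)]
        · have hclt : lt k = W - S := by simp [hlt]
          have hcyt : yt k = (W - S) / C (a k) := by simp [hyt]
          rw [hclt, hcyt, hr]
          field_simp
        · intro j hj hjk
          simp only [Finset.mem_filter] at hj
          simp [hlt, hyt, hj.2, hjk]
      rw [h1, h2]
  · -- lower bound
    rintro z ⟨x, y, l, hx0, hx1, hy0, hy1, hl0, hxsum, hlsum, hly, hz⟩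
    set t := r (a k) with ht
    have hlC : ∀ b, l b ≤ C b := fun b =>
      (hly b).trans (by nlinarith [hC b, hy1 b])
    have hlW : ∑ b, l b = W := by
      have : ∑ b, l b = ∑ b, ∑ i, w i * x i b := by
        exact Finset.sum_congr rfl fun b _ => (hlsum b).symm
      rw [this, Finset.sum_comm]
      rw [hW]
      refine Finset.sum_congr rfl fun i _ => ?_
      rw [← Finset.mul_sum, hxsum i, mul_one]
    have hzr : ∑ b, r b * l b ≤ z := by
      rw [hz]
      refine Finset.sum_le_sum fun b _ => ?_
      have hyb : l b / C b ≤ y b := (div_le_iff₀ (hC b)).2 (by linarith [hly b, mul_comm (C b) (y b)])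
      have : f b * (l b / C b) ≤ f b * y b := mul_le_mul_of_nonneg_left hyb (hf b)
      rw [hr]
      have h0 : f b / C b * l b = f b * (l b / C b) := by ring
      nlinarith
    have hreidx : ∑ b, r b * l b = ∑ j, r (a j) * l (a j) :=
      (Equiv.sum_comp a (fun b => r b * l b)).symm
    have hLW : ∑ j, l (a j) = W := by rw [Equiv.sum_comp a l]; exact hlW
    -- main inequality on sorted indices
    have hmain : (∑ j ∈ univ.filter (fun j => j < k), (r (a j) - t) * C (a j))
        ≤ ∑ j, (r (a j) - t) * l (a j) := by
      rw [hsplit (fun j => (r (a j) - t) * l (a j))]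
      have h1 : ∑ j ∈ univ.filter (fun j => j < k), (r (a j) - t) * C (a j)
          ≤ ∑ j ∈ univ.filter (fun j => j < k), (r (a j) - t) * l (a j) := by
        refine Finset.sum_le_sum fun j hj => ?_
        simp only [Finset.mem_filter] at hj
        have hrt : r (a j) - t ≤ 0 := by
          have := ha hj.2.le
          simpa [ht] using sub_nonpos.2 this
        exact mul_le_mul_of_nonpos_left (hlC (a j)) hrt
      have h2 : (0:ℝ) ≤ ∑ j ∈ univ.filter (fun j => ¬ j < k), (r (a j) - t) * l (a j) := by
        refine Finset.sum_nonneg fun j hj => ?_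
        simp only [Finset.mem_filter] at hj
        have hrt : 0 ≤ r (a j) - t := by
          have := ha (not_lt.1 hj.2)
          simpa [ht] using sub_nonneg.2 this
        exact mul_nonneg hrt (hl0 (a j))
      linarith
    have hexp1 : ∑ j, (r (a j) - t) * l (a j) = (∑ j, r (a j) * l (a j)) - t * W := by
      rw [← hLW, Finset.mul_sum, ← Finset.sum_sub_distrib]
      refine Finset.sum_congr rfl fun j _ => by ring
    have hexp2 : ∑ j ∈ univ.filter (fun j => j < k), (r (a j) - t) * C (a j)
        = (∑ j ∈ univ.filter (fun j => j < k), C (a j) * r (a j)) - t * S := by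
      rw [hS, Finset.mul_sum, ← Finset.sum_sub_distrib]
      refine Finset.sum_congr rfl fun j _ => by ring
    rw [hexp1, hexp2] at hmain
    rw [hreidx] at hzr
    have : S * t + (W - S) * t = t * W := by ring
    linarith
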